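/- Let ψ be a nontrivial good character of F of conductor 1. Let α_1,…,α_m ∈ F^× and γ_1,…,γ_m ∈ Γ satisfy ν(α_i) < −γ_i for each i, and let f_i ∈ 𝓛^{γ_i} for each i. If the function ∑_{i=1}^m f_i·ψ_{α_i} belongs to 𝓛(F), then ∫^F ∑_{i=1}^m f_i(x)ψ_{α_i}(x) dx = 0. -/

import Mathlib

noncomputable section

open MeasureTheory

/-- A field `F` with a split valuation `ν : F^× → Γ` (split by `t`), with residue field `k`,
residue map `ρ : O_F → k`, where `Γ` has a minimal positive element `one`. -/
structure LiftSetup (Γ F k : Type*) [AddCommGroup Γ] [LinearOrder Γ] [IsOrderedAddMonoid Γ] [Field F] [Field k] where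
  /-- the valuation (recorded on nonzero elements) -/
  ν : F → Γ
  /-- the splitting homomorphism `t : Γ → F^×` -/
  t : Γ → F
  /-- the residue map (recorded on the valuation ring) -/
  ρ : F → k
  /-- the minimal positive element of `Γ` -/
  one : Γ
  one_pos : 0 < one
  one_min : ∀ γ : Γ, 0 < γ → one ≤ γ
  ν_mul : ∀ x y : F, x ≠ 0 → y ≠ 0 → ν (x * y) = ν x + ν y
  ν_add : ∀ x y : F, x ≠ 0 → y ≠ 0 → x + y ≠ 0 → min (ν x) (ν y) ≤ ν (x + y)
  t_ne : ∀ γ : Γ, t γ ≠ 0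
  t_add : ∀ γ δ : Γ, t (γ + δ) = t γ * t δ
  ν_t : ∀ γ : Γ, ν (t γ) = γ
  ρ_add : ∀ x y : F, (x = 0 ∨ 0 ≤ ν x) → (y = 0 ∨ 0 ≤ ν y) → ρ (x + y) = ρ x + ρ y
  ρ_mul : ∀ x y : F, (x = 0 ∨ 0 ≤ ν x) → (y = 0 ∨ 0 ≤ ν y) → ρ (x * y) = ρ x * ρ y
  ρ_one : ρ 1 = 1
  ρ_surj : ∀ u : k, ∃ x : F, (x = 0 ∨ 0 ≤ ν x) ∧ ρ x = u
  ρ_eq_zero : ∀ x : F, (x = 0 ∨ 0 ≤ ν x) → (ρ x = 0 ↔ (x = 0 ∨ 0 < ν x))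

namespace LiftSetup

variable {Γ F k : Type*} [AddCommGroup Γ] [LinearOrder Γ] [IsOrderedAddMonoid Γ] [Field F] [Field k]
variable (S : LiftSetup Γ F k)

/-- The ring of integers `O_F` of the valuation. -/
def integers : Set F := {x | x = 0 ∨ 0 ≤ S.ν x}

/-- The translated fractional ideal `a + t(γ)O_F`. -/
def fracIdeal (a : F) (γ : Γ) : Set F := {x | (x - a) * S.t (-γ) ∈ S.integers}

/-- The lift `f^{a,γ}` of a function `f` on the residue field `k`:
`f^{a,γ}(x) = f(ρ((x-a)t(-γ)))` for `x ∈ a + t(γ)O_F` and `0` otherwise. -/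
def lift {A : Type*} [Zero A] (f : k → A) (a : F) (γ : Γ) : F → A :=
  (S.fracIdeal a γ).indicator fun x => f (S.ρ ((x - a) * S.t (-γ)))

/-- The homomorphism `η : F^× → k^×`, `x ↦ ρ(x t(-ν x))`. -/
def η (x : F) : k := S.ρ (x * S.t (-S.ν x))

end LiftSetup

section CGamma

variable (Γ : Type*) [AddCommGroup Γ] [LinearOrder Γ] [IsOrderedAddMonoid Γ]

instance : IsDomain (AddMonoidAlgebra ℂ Γ) := NoZeroDivisors.to_isDomain _

/-- `ℂ(Γ)`: the field of fractions of the complex group algebra of `Γ`. -/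
abbrev CGamma : Type _ := FractionRing (AddMonoidAlgebra ℂ Γ)

/-- The canonical embedding `ℂ → ℂ(Γ)`. -/
def embC : ℂ →+* CGamma Γ :=
  (algebraMap (AddMonoidAlgebra ℂ Γ) (CGamma Γ)).comp AddMonoidAlgebra.singleZeroRingHom

variable {Γ}

/-- The basis element `X^γ` of `ℂ(Γ)`. -/
def Xp (γ : Γ) : CGamma Γ :=
  algebraMap (AddMonoidAlgebra ℂ Γ) (CGamma Γ) (AddMonoidAlgebra.single γ 1)

end CGamma

section GoodChar

variable {Γ F k : Type*} [AddCommGroup Γ] [LinearOrder Γ] [IsOrderedAddMonoid Γ] [Field F] [Field k] [TopologicalSpace k]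

/-- `ψ` is a nontrivial good character of `F` of conductor `𝔣`: a homomorphism from the
additive group of `F` to the complex unit circle, trivial on `t(𝔣)O_F`, nontrivial on
`t(𝔣-1)O_F`, whose induced map `ψ̄` on the residue field `k` (given by
`ψ̄(ρ(x)) = ψ(t(𝔣-1)x)` for `x ∈ O_F`) is well defined and continuous. -/
def LiftSetup.IsGoodCharacter (S : LiftSetup Γ F k) (ψ : F → ℂ) (𝔣 : Γ) : Prop :=
  (∀ x y : F, ψ (x + y) = ψ x * ψ y) ∧
  (∀ x : F, ‖ψ x‖ = 1) ∧
  (∀ x ∈ S.integers, ψ (S.t 𝔣 * x) = 1) ∧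
  (∃ x ∈ S.integers, ψ (S.t (𝔣 - S.one) * x) ≠ 1) ∧
  (∃ ψbar : k → ℂ, Continuous ψbar ∧
    ∀ x ∈ S.integers, ψbar (S.ρ x) = ψ (S.t (𝔣 - S.one) * x))

end GoodChar

section LFmu

variable {Γ F k : Type*} [AddCommGroup Γ] [LinearOrder Γ] [IsOrderedAddMonoid Γ] [Field F] [Field k]
  [MeasurableSpace k]

open MeasureTheory

/-- `𝓛(F)`: the `ℂ(Γ)`-span of the lifts of Haar-integrable functions on `k`. -/
def LFmu (S : LiftSetup Γ F k) (μ : Measure k) : Submodule (CGamma Γ) (F → CGamma Γ) :=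
  Submodule.span (CGamma Γ)
    {g | ∃ f : k → ℂ, Integrable f μ ∧ ∃ (a : F) (γ : Γ),
        g = S.lift (fun u => embC Γ (f u)) a γ}

theorem liftC_mem_mu (S : LiftSetup Γ F k) (μ : Measure k)
    {f : k → ℂ} (hf : Integrable f μ) (a : F) (γ : Γ) :
    S.lift (fun u => embC Γ (f u)) a γ ∈ LFmu S μ :=
  Submodule.subset_span ⟨f, hf, a, γ, rfl⟩

/-- `𝓛^γ`: the complex span of the lifts of Haar-integrable functions at height `γ`. -/
def Lheight (S : LiftSetup Γ F k) (μ : Measure k) (γ : Γ) : Submodule ℂ (F → ℂ) :=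
  Submodule.span ℂ {g | ∃ f : k → ℂ, Integrable f μ ∧ ∃ a : F, g = S.lift f a γ}

end LFmu

section Statement4Aux

open MeasureTheory

variable {Γ F k : Type*} [AddCommGroup Γ] [LinearOrder Γ] [IsOrderedAddMonoid Γ] [Field F] [Field k]

namespace LiftSetup

variable (S : LiftSetup Γ F k)

private theorem half_zero' {a : Γ} (h : a + a = 0) : a = 0 := by
  rcases lt_trichotomy a 0 with h1 | h1 | h1
  · exact absurd h (ne_of_lt (by simpa using add_lt_add h1 h1))
  · exact h1
  · exact absurd h (ne_of_gt (by simpa using add_lt_add h1 h1))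

theorem ν_one' : S.ν 1 = 0 := by
  have h := S.ν_mul 1 1 one_ne_zero one_ne_zero
  rw [mul_one] at h
  exact add_eq_left.mp h.symm

theorem ν_neg' (x : F) (hx : x ≠ 0) : S.ν (-x) = S.ν x := by
  have h1 : S.ν (-1 : F) = 0 := by
    have h := S.ν_mul (-1) (-1) (by norm_num) (by norm_num)
    rw [neg_mul_neg, one_mul, S.ν_one'] at h
    exact half_zero' h.symm
  have h := S.ν_mul (-1) x (by norm_num) hx
  rw [neg_one_mul, h1, zero_add] at h
  exact h

theorem ν_inv' (x : F) (hx : x ≠ 0) : S.ν x⁻¹ = -S.ν x := by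
  have h := S.ν_mul x x⁻¹ hx (inv_ne_zero hx)
  rw [mul_inv_cancel₀ hx, S.ν_one'] at h
  exact eq_neg_of_add_eq_zero_left (by rw [add_comm]; exact h.symm)

theorem t_zero' : S.t 0 = 1 := by
  have h := S.t_add 0 0
  rw [add_zero] at h
  have h0 := S.t_ne 0
  have : S.t 0 * 1 = S.t 0 * S.t 0 := by rw [mul_one]; exact h
  exact (mul_left_cancel₀ h0 this).symm

theorem integers_add' {x y : F} (hx : x ∈ S.integers) (hy : y ∈ S.integers) :
    x + y ∈ S.integers := by
  by_cases hx0 : x = 0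
  · subst hx0; simpa using hy
  by_cases hy0 : y = 0
  · subst hy0; simpa using hx
  by_cases hxy : x + y = 0
  · exact Or.inl hxy
  have hνx : 0 ≤ S.ν x := hx.resolve_left hx0
  have hνy : 0 ≤ S.ν y := hy.resolve_left hy0
  exact Or.inr (le_trans (le_min hνx hνy) (S.ν_add x y hx0 hy0 hxy))

theorem lift_apply_mem {A : Type*} [Zero A] (f : k → A) (a : F) (γ : Γ) {x : F}
    (h : x ∈ S.fracIdeal a γ) : S.lift f a γ x = f (S.ρ ((x - a) * S.t (-γ))) :=
  Set.indicator_of_mem h _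

theorem lift_apply_not_mem {A : Type*} [Zero A] (f : k → A) (a : F) (γ : Γ) {x : F}
    (h : x ∉ S.fracIdeal a γ) : S.lift f a γ x = 0 :=
  Set.indicator_of_notMem h _

/-- Translating a lift: `f^{a,γ}(x+b) = f^{a-b,γ}(x)`. -/
theorem lift_translate {A : Type*} [Zero A] (f : k → A) (a b : F) (γ : Γ) :
    (fun x => S.lift f a γ (x + b)) = S.lift f (a - b) γ := by
  funext x
  have hx : x + b - a = x - (a - b) := by ring
  by_cases h : x ∈ S.fracIdeal (a - b) γ
  · have h2 : x + b ∈ S.fracIdeal a γ := by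
      show (x + b - a) * S.t (-γ) ∈ S.integers
      rw [hx]; exact h
    rw [S.lift_apply_mem f a γ h2, S.lift_apply_mem f (a - b) γ h, hx]
  · have h2 : x + b ∉ S.fracIdeal a γ := by
      intro hh
      apply h
      show (x - (a - b)) * S.t (-γ) ∈ S.integers
      rw [← hx]; exact hh
    rw [S.lift_apply_not_mem f a γ h2, S.lift_apply_not_mem f (a - b) γ h]

/-- If `γ < ν b` then lifts of height `γ` are invariant under translation by `b`. -/
theorem lift_translate_inv {A : Type*} [Zero A] (f : k → A) (a b : F) (γ : Γ)
    (hb0 : b ≠ 0) (hb : γ < S.ν b) (x : F) :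
    S.lift f a γ (x + b) = S.lift f a γ x := by
  set cb := b * S.t (-γ) with hcb
  have hcbne : cb ≠ 0 := mul_ne_zero hb0 (S.t_ne _)
  have hνcb : 0 < S.ν cb := by
    have h := S.ν_mul b (S.t (-γ)) hb0 (S.t_ne _)
    rw [h, S.ν_t, ← sub_eq_add_neg]
    exact sub_pos.mpr hb
  have hcbint : cb ∈ S.integers := Or.inr hνcb.le
  have hρcb : S.ρ cb = 0 := (S.ρ_eq_zero cb hcbint).2 (Or.inr hνcb)
  have hncbint : -cb ∈ S.integers := Or.inr (by rw [S.ν_neg' cb hcbne]; exact hνcb.le)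
  have key : (x + b - a) * S.t (-γ) = (x - a) * S.t (-γ) + cb := by rw [hcb]; ring
  have hmemiff : (x + b ∈ S.fracIdeal a γ) ↔ (x ∈ S.fracIdeal a γ) := by
    constructor
    · intro h
      have h' : (x + b - a) * S.t (-γ) ∈ S.integers := h
      have : (x + b - a) * S.t (-γ) + (-cb) ∈ S.integers := S.integers_add' h' hncbint
      rw [key] at this
      exact (by simpa using this : (x - a) * S.t (-γ) ∈ S.integers)
    · intro h
      have h' : (x - a) * S.t (-γ) ∈ S.integers := h
      show (x + b - a) * S.t (-γ) ∈ S.integers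
      rw [key]
      exact S.integers_add' h' hcbint
  by_cases h : x ∈ S.fracIdeal a γ
  · have h2 : x + b ∈ S.fracIdeal a γ := hmemiff.2 h
    rw [S.lift_apply_mem f a γ h2, S.lift_apply_mem f a γ h, key,
      S.ρ_add _ _ h hcbint, hρcb, add_zero]
  · have h2 : x + b ∉ S.fracIdeal a γ := fun hh => h (hmemiff.1 hh)
    rw [S.lift_apply_not_mem f a γ h2, S.lift_apply_not_mem f a γ h]

end LiftSetup

/-- Translation as a linear map on functions. -/
def transLM (R : Type*) [Semiring R] (b : F) : (F → R) →ₗ[R] (F → R) where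
  toFun g := fun x => g (x + b)
  map_add' _ _ := rfl
  map_smul' _ _ := rfl

section MeasurePart

variable [MeasurableSpace k] (S : LiftSetup Γ F k) (μ : Measure k)
variable [TopologicalSpace k]

theorem Lheight_translate_mem (b : F) (γ : Γ) {g : F → ℂ} (hg : g ∈ Lheight S μ γ) :
    (fun x => g (x + b)) ∈ Lheight S μ γ := by
  have : transLM ℂ b g ∈ Lheight S μ γ := by
    refine Submodule.span_induction (p := fun g _ => transLM ℂ b g ∈ Lheight S μ γ)
      ?_ ?_ ?_ ?_ hg
    · rintro g ⟨f, hf, a, rfl⟩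
      have : transLM ℂ b (S.lift f a γ) = S.lift f (a - b) γ := by
        funext x; exact congrFun (S.lift_translate f a b γ) x
      rw [this]
      exact Submodule.subset_span ⟨f, hf, a - b, rfl⟩
    · simpa using Submodule.zero_mem _
    · intro x y _ _ hx hy
      rw [map_add]; exact Submodule.add_mem _ hx hy
    · intro c x _ hx
      rw [LinearMap.map_smul]; exact Submodule.smul_mem _ c hx
  exact this

theorem Lheight_translate_inv (b : F) (hb0 : b ≠ 0) (γ : Γ) (hb : γ < S.ν b)
    {g : F → ℂ} (hg : g ∈ Lheight S μ γ) : ∀ x, g (x + b) = g x := by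
  refine Submodule.span_induction (p := fun g _ => ∀ x, g (x + b) = g x) ?_ ?_ ?_ ?_ hg
  · rintro g ⟨f, hf, a, rfl⟩ x
    exact S.lift_translate_inv f a b γ hb0 hb x
  · intro x; rfl
  · intro u v _ _ hu hv x
    simp [Pi.add_apply, hu x, hv x]
  · intro c u _ hu x
    simp [Pi.smul_apply, hu x]

theorem LFmu_translate_mem (b : F) {g : F → CGamma Γ} (hg : g ∈ LFmu S μ) :
    (fun x => g (x + b)) ∈ LFmu S μ := by
  have : transLM (CGamma Γ) b g ∈ LFmu S μ := by
    refine Submodule.span_induction (p := fun g _ => transLM (CGamma Γ) b g ∈ LFmu S μ)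
      ?_ ?_ ?_ ?_ hg
    · rintro g ⟨f, hf, a, γ, rfl⟩
      have : transLM (CGamma Γ) b (S.lift (fun u => embC Γ (f u)) a γ)
          = S.lift (fun u => embC Γ (f u)) (a - b) γ := by
        funext x; exact congrFun (S.lift_translate (fun u => embC Γ (f u)) a b γ) x
      rw [this]
      exact Submodule.subset_span ⟨f, hf, a - b, γ, rfl⟩
    · simpa using Submodule.zero_mem _
    · intro x y _ _ hx hy
      rw [map_add]; exact Submodule.add_mem _ hx hy
    · intro c x _ hx
      rw [LinearMap.map_smul]; exact Submodule.smul_mem _ c hx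
  exact this

theorem J'_translate_inv (b : F)
    (J' : (F → CGamma Γ) →ₗ[CGamma Γ] CGamma Γ)
    (hJ' : ∀ (f : k → ℂ), Integrable f μ → ∀ (a : F) (γ : Γ),
      J' (S.lift (fun u => embC Γ (f u)) a γ) = embC Γ (∫ u, f u ∂μ) * Xp γ)
    {g : F → CGamma Γ} (hg : g ∈ LFmu S μ) :
    J' (fun x => g (x + b)) = J' g := by
  have hker : LFmu S μ ≤ LinearMap.ker (J'.comp (transLM (CGamma Γ) b) - J') := by
    rw [LFmu, Submodule.span_le]
    rintro g ⟨f, hf, a, γ, rfl⟩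
    simp only [SetLike.mem_coe, LinearMap.mem_ker, LinearMap.sub_apply, LinearMap.comp_apply]
    have h1 : transLM (CGamma Γ) b (S.lift (fun u => embC Γ (f u)) a γ)
        = S.lift (fun u => embC Γ (f u)) (a - b) γ := by
      funext x; exact congrFun (S.lift_translate (fun u => embC Γ (f u)) a b γ) x
    rw [h1, hJ' f hf (a - b) γ, hJ' f hf a γ, sub_self]
  have := hker hg
  rw [LinearMap.mem_ker, LinearMap.sub_apply, LinearMap.comp_apply] at this
  have heq : J' (transLM (CGamma Γ) b g) = J' g := by
    have := sub_eq_zero.mp this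
    exact this
  exact heq

/-- The key vanishing lemma, proved by induction on the number of characters. -/
theorem aux_vanish
    (ψ : F → ℂ) (hψ : S.IsGoodCharacter ψ S.one)
    (J' : (F → CGamma Γ) →ₗ[CGamma Γ] CGamma Γ)
    (hJ' : ∀ (f : k → ℂ), Integrable f μ → ∀ (a : F) (γ : Γ),
      J' (S.lift (fun u => embC Γ (f u)) a γ) = embC Γ (∫ u, f u ∂μ) * Xp γ) :
    ∀ (m : ℕ) (α : Fin m → F), (∀ i, α i ≠ 0) → ∀ (γ : Fin m → Γ),
      (∀ i, S.ν (α i) < -(γ i)) → ∀ (f : Fin m → (F → ℂ)),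
      (∀ i, f i ∈ Lheight S μ (γ i)) →
      (fun x => embC Γ (∑ i, f i x * ψ (α i * x))) ∈ LFmu S μ →
      J' (fun x => embC Γ (∑ i, f i x * ψ (α i * x))) = 0 := by
  obtain ⟨hhom, habs, -, ⟨x₀, hx₀int, hx₀⟩, -⟩ := hψ
  rw [sub_self, S.t_zero', one_mul] at hx₀
  -- basic facts about ψ
  have hψ0 : ψ 0 = 1 := by
    have h := hhom 0 0
    rw [add_zero] at h
    have hne : ψ 0 ≠ 0 := by
      intro h0; have := habs 0; rw [h0] at this; simp at this
    have : ψ 0 * 1 = ψ 0 * ψ 0 := by rw [mul_one]; exact h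
    exact (mul_left_cancel₀ hne this).symm
  have hx₀ne : x₀ ≠ 0 := by rintro rfl; exact hx₀ hψ0
  have hνx₀ : 0 ≤ S.ν x₀ := hx₀int.resolve_left hx₀ne
  intro m
  induction m with
  | zero =>
    intro α hα γ hlt f hf hmem
    have : (fun x : F => embC Γ (∑ i : Fin 0, f i x * ψ (α i * x))) = 0 := by
      funext x; simp
    rw [this, map_zero]
  | succ m ih =>
    intro α hα γ hlt f hf hmem
    set L := Fin.last m with hL
    set b := x₀ * (α L)⁻¹ with hbdef
    have hbne : b ≠ 0 := mul_ne_zero hx₀ne (inv_ne_zero (hα L))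
    have hνb : S.ν b = S.ν x₀ - S.ν (α L) := by
      rw [hbdef, S.ν_mul x₀ (α L)⁻¹ hx₀ne (inv_ne_zero (hα L)), S.ν_inv' _ (hα L),
        ← sub_eq_add_neg]
    have hbbig : γ L < S.ν b := by
      rw [hνb]
      have h1 : γ L < -S.ν (α L) := lt_neg.mp (hlt L)
      refine lt_of_lt_of_le h1 ?_
      rw [← zero_sub]
      exact sub_le_sub_right hνx₀ _
    set c := ψ x₀ with hcdef
    have hcψ : ψ (α L * b) = c := by
      rw [hbdef, mul_comm x₀, ← mul_assoc, mul_inv_cancel₀ (hα L), one_mul]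
    have hfLinv : ∀ x, f L (x + b) = f L x :=
      Lheight_translate_inv S μ b hbne (γ L) hbbig (hf L)
    -- new data
    set α' : Fin m → F := fun i => α i.castSucc with hα'def
    set γ' : Fin m → Γ := fun i => γ i.castSucc with hγ'def
    set f' : Fin m → (F → ℂ) :=
      fun i => ψ (α i.castSucc * b) • (fun x => f i.castSucc (x + b)) - c • f i.castSucc
      with hf'def
    have hf' : ∀ i, f' i ∈ Lheight S μ (γ' i) := by
      intro i
      exact Submodule.sub_mem _
        (Submodule.smul_mem _ _ (Lheight_translate_mem S μ b _ (hf i.castSucc)))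
        (Submodule.smul_mem _ _ (hf i.castSucc))
    set H : F → CGamma Γ := fun x => embC Γ (∑ i, f i x * ψ (α i * x)) with hHdef
    -- the key pointwise identity
    have hkey : (fun x => embC Γ (∑ i, f' i x * ψ (α' i * x)))
        = (fun x => H (x + b)) - embC Γ c • H := by
      funext x
      simp only [Pi.sub_apply, Pi.smul_apply, smul_eq_mul, hHdef]
      rw [← RingHom.map_mul (embC Γ), ← RingHom.map_sub (embC Γ)]
      congr 1
      have expand : ∀ i : Fin (m + 1), f i (x + b) * ψ (α i * (x + b))
          = (ψ (α i * b) * f i (x + b)) * ψ (α i * x) := by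
        intro i
        have : α i * (x + b) = α i * x + α i * b := by ring
        rw [this, hhom]
        ring
      have hlast : f L (x + b) * ψ (α L * (x + b)) = c * (f L x * ψ (α L * x)) := by
        rw [expand L, hfLinv x, hcψ]; ring
      have hexp : ∑ i : Fin m, f i.castSucc (x + b) * ψ (α i.castSucc * (x + b))
          = ∑ i : Fin m, (ψ (α i.castSucc * b) * f i.castSucc (x + b))
            * ψ (α i.castSucc * x) :=
        Finset.sum_congr rfl fun i _ => expand i.castSucc
      calc ∑ i : Fin m, f' i x * ψ (α' i * x)
          = ∑ i : Fin m, ((ψ (α i.castSucc * b) * f i.castSucc (x + b)) * ψ (α i.castSucc * x)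
            - c * (f i.castSucc x * ψ (α i.castSucc * x))) := by
            refine Finset.sum_congr rfl fun i _ => ?_
            simp only [hf'def, hα'def, Pi.sub_apply, Pi.smul_apply, smul_eq_mul]
            ring
        _ = (∑ i : Fin (m + 1), f i (x + b) * ψ (α i * (x + b)))
            - c * ∑ i : Fin (m + 1), f i x * ψ (α i * x) := by
            rw [Fin.sum_univ_castSucc (f := fun i => f i (x + b) * ψ (α i * (x + b))),
              Fin.sum_univ_castSucc (f := fun i => f i x * ψ (α i * x)), hlast, hexp,
              Finset.sum_sub_distrib]
            rw [show ∑ i : Fin m, c * (f i.castSucc x * ψ (α i.castSucc * x))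
              = c * ∑ i : Fin m, f i.castSucc x * ψ (α i.castSucc * x) from
              (Finset.mul_sum _ _ _).symm]
            ring
    have hmem' : (fun x => embC Γ (∑ i, f' i x * ψ (α' i * x))) ∈ LFmu S μ := by
      rw [hkey]
      exact Submodule.sub_mem _ (LFmu_translate_mem S μ b hmem)
        (Submodule.smul_mem _ _ hmem)
    have hIH := ih α' (fun i => hα i.castSucc) γ' (fun i => hlt i.castSucc) f' hf' hmem'
    rw [hkey, map_sub, LinearMap.map_smul, J'_translate_inv S μ b J' hJ' hmem, smul_eq_mul] at hIH
    -- now (1 - embC c) * J' H = 0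
    have hfactor : (1 - embC Γ c) * J' H = 0 := by
      rw [sub_mul, one_mul]
      exact hIH
    have hcne : embC Γ c ≠ 1 := by
      intro h
      apply hx₀
      have hinj : Function.Injective (embC Γ) := (embC Γ).injective
      have : embC Γ c = embC Γ 1 := by rw [h, map_one]
      exact hinj this
    have h1c : (1 - embC Γ c) ≠ 0 := sub_ne_zero.mpr (fun h => hcne h.symm)
    exact (mul_eq_zero.mp hfactor).resolve_left h1c

end MeasurePart

end Statement4Aux

open MeasureTheory in
/-- Let `ψ` be a nontrivial good character of `F` of conductor `1`. If
`ν(αᵢ) < -γᵢ` and `fᵢ ∈ 𝓛^{γᵢ}` for each `i`, and `∑ᵢ fᵢ·ψ_{αᵢ}` belongs to `𝓛(F)`, then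
`∫^F ∑ᵢ fᵢ(x)ψ_{αᵢ}(x) dx = 0`. -/
theorem statement4
    {Γ F k : Type*} [AddCommGroup Γ] [LinearOrder Γ] [IsOrderedAddMonoid Γ] [Field F] [Field k]
    [TopologicalSpace k] [IsTopologicalRing k] [LocallyCompactSpace k]
    [MeasurableSpace k] [BorelSpace k]
    (hk_nondiscrete : ¬ IsOpen ({0} : Set k))
    (μ : Measure k) [μ.IsAddHaarMeasure]
    (S : LiftSetup Γ F k)
    (ψ : F → ℂ) (hψ : S.IsGoodCharacter ψ S.one)
    (J : LFmu S μ →ₗ[CGamma Γ] CGamma Γ)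
    (hJ : ∀ (f : k → ℂ) (hf : Integrable f μ) (a : F) (γ : Γ),
      J ⟨S.lift (fun u => embC Γ (f u)) a γ, liftC_mem_mu S μ hf a γ⟩
        = embC Γ (∫ u, f u ∂μ) * Xp γ)
    (m : ℕ) (α : Fin m → F) (hα : ∀ i, α i ≠ 0) (γ : Fin m → Γ)
    (hlt : ∀ i, S.ν (α i) < -(γ i))
    (f : Fin m → (F → ℂ)) (hf : ∀ i, f i ∈ Lheight S μ (γ i))
    (hmem : (fun x => embC Γ (∑ i, f i x * ψ (α i * x))) ∈ LFmu S μ) :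
    J ⟨fun x => embC Γ (∑ i, f i x * ψ (α i * x)), hmem⟩ = 0 := by
  obtain ⟨J', hJ'comp⟩ := LinearMap.exists_extend J
  have hJval : ∀ (g : F → CGamma Γ) (hg : g ∈ LFmu S μ), J ⟨g, hg⟩ = J' g := by
    intro g hg
    rw [← hJ'comp]
    rfl
  have hJ' : ∀ (f : k → ℂ), Integrable f μ → ∀ (a : F) (γ : Γ),
      J' (S.lift (fun u => embC Γ (f u)) a γ) = embC Γ (∫ u, f u ∂μ) * Xp γ := by
    intro f hf a γ
    rw [← hJval _ (liftC_mem_mu S μ hf a γ)]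
    exact hJ f hf a γ
  rw [hJval _ hmem]
  exact aux_vanish S μ ψ hψ J' hJ' m α hα γ hlt f hf hmem
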